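/- For every ε ∈ ℝ, the cubic system ẋ = −x + x³, ẏ = −y + 3x²y − 18εxy² + 36ε²y³ (with P = −x+x³, Q = −y+3x²y−18εxy²+36ε²y³) satisfies: x, x−1 and x+1 divide P; y divides Q; (x−3εy) divides P−3εQ; and (x−6εy), (x−6εy−1), (x−6εy+1) divide P−6εQ in ℝ[x,y]. Consequently the eight straight lines x = 0, x = ±1, y = 0, x−3εy = 0, x−6εy = 0, x−6εy = ±1 are invariant straight lines of the system (and they are pairwise distinct when ε ≠ 0). -/

import Mathlib

set_option maxHeartbeats 1000000


open MvPolynomial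

/-- For the perturbed system `P = −x+x³`,
`Q = −y+3x²y−18εxy²+36ε²y³` one has `x, x−1, x+1 ∣ P`, `y ∣ Q`,
`(x−3εy) ∣ P−3εQ`, and `(x−6εy), (x−6εy−1), (x−6εy+1) ∣ P−6εQ`; hence the
eight lines `x = 0`, `x = ±1`, `y = 0`, `x−3εy = 0`, `x−6εy = 0`,
`x−6εy = ±1` are invariant straight lines, pairwise distinct when `ε ≠ 0`. -/
theorem perturbed_system_fig19 (ε : ℝ) :
    (X 0 : MvPolynomial (Fin 2) ℝ) ∣ (-X 0 + X 0 ^ 3) ∧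
    (X 0 - 1 : MvPolynomial (Fin 2) ℝ) ∣ (-X 0 + X 0 ^ 3) ∧
    (X 0 + 1 : MvPolynomial (Fin 2) ℝ) ∣ (-X 0 + X 0 ^ 3) ∧
    (X 1 : MvPolynomial (Fin 2) ℝ) ∣
      (-X 1 + 3 * X 0 ^ 2 * X 1 - C (18 * ε) * X 0 * X 1 ^ 2 +
        C (36 * ε ^ 2) * X 1 ^ 3) ∧
    (X 0 - C (3 * ε) * X 1 : MvPolynomial (Fin 2) ℝ) ∣
      ((-X 0 + X 0 ^ 3) - C (3 * ε) *
        (-X 1 + 3 * X 0 ^ 2 * X 1 - C (18 * ε) * X 0 * X 1 ^ 2 +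
          C (36 * ε ^ 2) * X 1 ^ 3)) ∧
    (X 0 - C (6 * ε) * X 1 : MvPolynomial (Fin 2) ℝ) ∣
      ((-X 0 + X 0 ^ 3) - C (6 * ε) *
        (-X 1 + 3 * X 0 ^ 2 * X 1 - C (18 * ε) * X 0 * X 1 ^ 2 +
          C (36 * ε ^ 2) * X 1 ^ 3)) ∧
    (X 0 - C (6 * ε) * X 1 - 1 : MvPolynomial (Fin 2) ℝ) ∣
      ((-X 0 + X 0 ^ 3) - C (6 * ε) *
        (-X 1 + 3 * X 0 ^ 2 * X 1 - C (18 * ε) * X 0 * X 1 ^ 2 +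
          C (36 * ε ^ 2) * X 1 ^ 3)) ∧
    (X 0 - C (6 * ε) * X 1 + 1 : MvPolynomial (Fin 2) ℝ) ∣
      ((-X 0 + X 0 ^ 3) - C (6 * ε) *
        (-X 1 + 3 * X 0 ^ 2 * X 1 - C (18 * ε) * X 0 * X 1 ^ 2 +
          C (36 * ε ^ 2) * X 1 ^ 3)) ∧
    (ε ≠ 0 → Function.Injective
      (![{z : ℝ × ℝ | z.1 = 0}, {z | z.1 = 1}, {z | z.1 = -1},
         {z | z.2 = 0}, {z | z.1 - 3 * ε * z.2 = 0},
         {z | z.1 - 6 * ε * z.2 = 0}, {z | z.1 - 6 * ε * z.2 = 1},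
         {z | z.1 - 6 * ε * z.2 = -1}] : Fin 8 → Set (ℝ × ℝ))) := by
  refine ⟨⟨X 0 ^ 2 - 1, by ring⟩, ⟨X 0 * (X 0 + 1), by ring⟩,
    ⟨X 0 * (X 0 - 1), by ring⟩,
    ⟨-1 + 3 * X 0 ^ 2 - C (18 * ε) * X 0 * X 1 + C (36 * ε ^ 2) * X 1 ^ 2,
      by simp only [C_mul, C_pow, map_ofNat]; ring⟩,
    ⟨-1 + X 0 ^ 2 - C (6 * ε) * X 0 * X 1 + C (36 * ε ^ 2) * X 1 ^ 2,
      by simp only [C_mul, C_pow, map_ofNat]; ring⟩,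
    ⟨(X 0 - C (6 * ε) * X 1) ^ 2 - 1,
      by simp only [C_mul, C_pow, map_ofNat]; ring⟩,
    ⟨(X 0 - C (6 * ε) * X 1) * (X 0 - C (6 * ε) * X 1 + 1),
      by simp only [C_mul, C_pow, map_ofNat]; ring⟩,
    ⟨(X 0 - C (6 * ε) * X 1) * (X 0 - C (6 * ε) * X 1 - 1),
      by simp only [C_mul, C_pow, map_ofNat]; ring⟩, ?_⟩
  intro hε i j hij
  fin_cases i <;> fin_cases j <;>
    simp only [Fin.zero_eta, Fin.mk_one, Fin.reduceFinMk, Matrix.cons_val, Matrix.cons_val_zero, Matrix.cons_val_one, Matrix.head_cons,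
      Matrix.cons_val_fin_one, Fin.mk_zero, Fin.mk_one, Matrix.cons_val',
      Matrix.cons_val_succ, Matrix.empty_val', Matrix.cons_val_fin_one,
      Set.ext_iff, Set.mem_setOf_eq] at hij <;>
  first
  | rfl
  | (exfalso
     have h1 := hij (0,0)
     have h2 := hij (1,0)
     have h3 := hij (-1,0)
     have h4 := hij (0,1)
     have h5 := hij (3*ε,1)
     have h6 := hij (6*ε,1)
     have h7 := hij (6*ε+1,1)
     have h8 := hij (6*ε-1,1)
     have h9 := hij (1,1)
     have h10 := hij (-1,1)
     have h11 := hij (6*ε,2)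
     have h12 := hij (-1,2)
     have h13 := hij (1,2)
     try norm_num at * <;>
     try exact hε (by linarith))
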